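/- The set {(2ⁿ, n, 2ⁿ + n) : n ≥ 1} ⊆ ℕ³ is not semilinear. -/

import Mathlib

/-- A subset of ℕ³ is linear if it is of the form
`{v₀ + k₁v₁ + ⋯ + kₘvₘ : kᵢ ∈ ℕ}`. -/
def IsLinearSet₃ (S : Set (ℕ × ℕ × ℕ)) : Prop :=
  ∃ (v₀ : ℕ × ℕ × ℕ) (m : ℕ) (v : Fin m → ℕ × ℕ × ℕ),
    S = {x | ∃ k : Fin m → ℕ, x = v₀ + ∑ i, k i • v i}

/-- A subset of ℕ³ is semilinear if it is a finite union of linear sets. -/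
def IsSemilinearSet₃ (S : Set (ℕ × ℕ × ℕ)) : Prop :=
  ∃ (r : ℕ) (f : Fin r → Set (ℕ × ℕ × ℕ)), (∀ i, IsLinearSet₃ (f i)) ∧ S = ⋃ i, f i

theorem pow_set_not_semilinear :
    ¬ IsSemilinearSet₃ {x : ℕ × ℕ × ℕ | ∃ n : ℕ, 1 ≤ n ∧ x = (2 ^ n, n, 2 ^ n + n)} := by
  rintro ⟨r, f, hlin, hS⟩
  have hSinf : {x : ℕ × ℕ × ℕ | ∃ n : ℕ, 1 ≤ n ∧ x = (2 ^ n, n, 2 ^ n + n)}.Infinite := by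
    apply Set.infinite_of_injective_forall_mem
      (f := fun n : ℕ => ((2 ^ (n + 1), n + 1, 2 ^ (n + 1) + (n + 1)) : ℕ × ℕ × ℕ))
    · intro a b hab
      have := congrArg (fun p : ℕ × ℕ × ℕ => p.2.1) hab
      simpa using this
    · intro n; exact ⟨n + 1, le_add_self, rfl⟩
  rw [hS] at hSinf
  obtain ⟨i, hfi⟩ : ∃ i, (f i).Infinite := by
    by_contra h
    push_neg at h
    exact hSinf (Set.finite_iUnion h)
  obtain ⟨v₀, m, v, hv⟩ := hlin i
  have hsub : f i ⊆ {x : ℕ × ℕ × ℕ | ∃ n : ℕ, 1 ≤ n ∧ x = (2 ^ n, n, 2 ^ n + n)} := by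
    rw [hS]; exact Set.subset_iUnion f i
  obtain ⟨j, hjne⟩ : ∃ j, v j ≠ 0 := by
    by_contra h
    push_neg at h
    apply hfi
    refine Set.Finite.subset (Set.finite_singleton v₀) ?_
    rw [hv]; rintro x ⟨k, rfl⟩
    simp [h]
  have mem : ∀ c : ℕ, v₀ + c • v j ∈ f i := by
    intro c
    rw [hv]
    refine ⟨Pi.single j c, ?_⟩
    congr 1
    rw [Finset.sum_eq_single j]
    · simp
    · intro b _ hb; simp [Pi.single_eq_of_ne hb]
    · intro h; exact absurd (Finset.mem_univ j) h
  obtain ⟨n0, hn0, e0⟩ := hsub (by simpa using mem 0)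
  obtain ⟨n1, hn1, e1⟩ := hsub (mem 1)
  obtain ⟨n2, hn2, e2⟩ := hsub (mem 2)
  rw [e0, one_smul] at e1
  rw [e0] at e2
  have A1 : 2 ^ n0 + (v j).1 = 2 ^ n1 := by
    have := congrArg (fun p : ℕ × ℕ × ℕ => p.1) e1
    simpa using this
  have B1 : n0 + (v j).2.1 = n1 := by
    have := congrArg (fun p : ℕ × ℕ × ℕ => p.2.1) e1
    simpa using this
  have C1 : 2 ^ n0 + n0 + (v j).2.2 = 2 ^ n1 + n1 := by
    have := congrArg (fun p : ℕ × ℕ × ℕ => p.2.2) e1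
    simpa using this
  have A2 : 2 ^ n0 + 2 * (v j).1 = 2 ^ n2 := by
    have := congrArg (fun p : ℕ × ℕ × ℕ => p.1) e2
    simpa [smul_eq_mul] using this
  have B2 : n0 + 2 * (v j).2.1 = n2 := by
    have := congrArg (fun p : ℕ × ℕ × ℕ => p.2.1) e2
    simpa [smul_eq_mul] using this
  set x := (v j).1 with hx
  set y := (v j).2.1 with hy
  set z := (v j).2.2 with hz
  by_cases hy0 : y = 0
  · -- then n1 = n0, x = 0, z = 0, contradicting v j ≠ 0
    have hn : n1 = n0 := by omega
    have hx0 : x = 0 := by rw [hn] at A1; omega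
    have hz0 : z = 0 := by rw [hn] at C1; omega
    apply hjne
    have : v j = (x, y, z) := rfl
    rw [this, hx0, hy0, hz0]
    rfl
  · have hy1 : 1 ≤ y := Nat.one_le_iff_ne_zero.mpr hy0
    have E : 2 ^ (n0 + 2 * y) + 2 ^ n0 = 2 * 2 ^ (n0 + y) := by
      rw [B1, B2]; omega
    rw [pow_add, pow_add] at E
    have pos : 1 ≤ 2 ^ n0 := Nat.one_le_two_pow
    have q : 2 * 2 ^ y ≤ 2 ^ (2 * y) := by
      calc 2 * 2 ^ y = 2 ^ (y + 1) := by rw [pow_succ]; ring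
        _ ≤ 2 ^ (2 * y) := Nat.pow_le_pow_right (by norm_num) (by omega)
    nlinarith [mul_le_mul_right q (2 ^ n0)]
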